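/- arXiv:0801.3088 — 5 statements merged into one kernel-verified Lean document; each statement's English description precedes it below -/
import Mathlib

section
/- Suppose F : D ⊂ X → Y is Fréchet differentiable and satisfies the tangential cone condition ‖F(x) − F(x̄) − F'(x)(x − x̄)‖ ≤ η ‖F(x) − F(x̄)‖ for all x, x̄ in a ball B, with η < 1/2. Let x* ∈ B satisfy F(x*) = y, let y^δ satisfy ‖y^δ − y‖ ≤ δ, let x ∈ B, set s := F'(x)*(F(x) − y^δ) and x₊ := x − α s with α > 0 satisfying α‖s‖² ≤ ‖F(x) − y^δ‖². Then ‖x₊ − x*‖² − ‖x − x*‖² ≤ α ‖F(x) − y^δ‖ ( (2η − 1)‖F(x) − y^δ‖ + 2(1+η) δ ). -/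
open scoped InnerProductSpace


/-- Error decomposition for one steepest-descent step under the
tangential cone condition. -/
theorem stmt3
    {X Y : Type*} [NormedAddCommGroup X] [InnerProductSpace ℝ X] [CompleteSpace X]
    [NormedAddCommGroup Y] [InnerProductSpace ℝ Y] [CompleteSpace Y]
    (F : X → Y) (F' : X → X →L[ℝ] Y) (B : Set X)
    (hdiff : ∀ x ∈ B, HasFDerivAt F (F' x) x)
    (η : ℝ) (hη0 : 0 ≤ η) (hη : η < 1 / 2)
    (htcc : ∀ x ∈ B, ∀ x' ∈ B, ‖F x - F x' - F' x (x - x')‖ ≤ η * ‖F x - F x'‖)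
    (xstar : X) (hxstarB : xstar ∈ B)
    (y yδ : Y) (δ : ℝ) (hδ : 0 ≤ δ)
    (hsol : F xstar = y) (hnoise : ‖yδ - y‖ ≤ δ)
    (x : X) (hxB : x ∈ B)
    (s : X) (hs : s = ContinuousLinearMap.adjoint (F' x) (F x - yδ))
    (α : ℝ) (hα : 0 < α) (hstep : α * ‖s‖ ^ 2 ≤ ‖F x - yδ‖ ^ 2)
    (xplus : X) (hxplus : xplus = x - α • s) :
    ‖xplus - xstar‖ ^ 2 - ‖x - xstar‖ ^ 2 ≤
      α * ‖F x - yδ‖ * ((2 * η - 1) * ‖F x - yδ‖ + 2 * (1 + η) * δ) := by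
  set t := ‖F x - yδ‖ with ht
  have ht0 : 0 ≤ t := norm_nonneg _
  set r := F x - F xstar - F' x (x - xstar) with hr
  have hFx : F x - F xstar = (F x - yδ) + (yδ - y) := by rw [hsol]; abel
  have hnr : ‖r‖ ≤ η * (t + δ) := by
    refine le_trans (htcc x hxB xstar hxstarB) ?_
    refine mul_le_mul_of_nonneg_left ?_ hη0
    rw [hFx]
    exact le_trans (norm_add_le _ _) (by linarith)
  have hadj : (⟪x - xstar, s⟫_ℝ) = (⟪F x - yδ, F' x (x - xstar)⟫_ℝ) := by
    rw [hs, real_inner_comm, ContinuousLinearMap.adjoint_inner_left]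
  have hinner : (1 - η) * t ^ 2 - (1 + η) * δ * t ≤ (⟪x - xstar, s⟫_ℝ) := by
    rw [hadj]
    have hF' : F' x (x - xstar) = (F x - yδ) + (yδ - y) - r := by
      rw [hr, hFx]; abel
    rw [hF', inner_sub_right, inner_add_right]
    have h1 : (⟪F x - yδ, F x - yδ⟫_ℝ) = t ^ 2 := by
      rw [real_inner_self_eq_norm_sq]
    have h2 : |(⟪F x - yδ, yδ - y⟫_ℝ)| ≤ t * δ :=
      le_trans (abs_real_inner_le_norm _ _) (mul_le_mul_of_nonneg_left hnoise ht0)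
    have h3 : (⟪F x - yδ, r⟫_ℝ) ≤ t * (η * (t + δ)) :=
      le_trans (real_inner_le_norm _ _) (mul_le_mul_of_nonneg_left hnr ht0)
    have h2' := neg_abs_le (⟪F x - yδ, yδ - y⟫_ℝ)
    nlinarith
  have hexp : ‖xplus - xstar‖ ^ 2 =
      ‖x - xstar‖ ^ 2 - 2 * α * (⟪x - xstar, s⟫_ℝ) + α ^ 2 * ‖s‖ ^ 2 := by
    rw [hxplus]
    have h4 : x - α • s - xstar = (x - xstar) - α • s := by abel
    rw [h4, norm_sub_sq_real, real_inner_smul_right, norm_smul,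
      Real.norm_eq_abs, abs_of_pos hα]
    ring
  have hs2 : α ^ 2 * ‖s‖ ^ 2 ≤ α * t ^ 2 := by nlinarith
  rw [hexp]
  nlinarith [hinner, hα.le]
end

section
/- Under the tangential cone condition with η < 1/2 and the hypotheses of the previous error-decomposition inequality, if in addition ‖F(x) − y^δ‖ ≥ τ δ with τ ≥ 2(1+η)/(1−2η), then ‖x₊ − x*‖ ≤ ‖x − x*‖, i.e., the steepest descent step is monotone with respect to the distance to the exact solution. -/
set_option maxHeartbeats 1000000 in
/-- Monotonicity of the steepest descent step under the discrepancy
condition ‖F(x) − y^δ‖ ≥ τδ with τ ≥ 2(1+η)/(1−2η). -/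
theorem stmt4
    {X Y : Type*} [NormedAddCommGroup X] [InnerProductSpace ℝ X] [CompleteSpace X]
    [NormedAddCommGroup Y] [InnerProductSpace ℝ Y] [CompleteSpace Y]
    (F : X → Y) (F' : X → X →L[ℝ] Y) (B : Set X)
    (hdiff : ∀ x ∈ B, HasFDerivAt F (F' x) x)
    (η : ℝ) (hη0 : 0 ≤ η) (hη : η < 1 / 2)
    (htcc : ∀ x ∈ B, ∀ x' ∈ B, ‖F x - F x' - F' x (x - x')‖ ≤ η * ‖F x - F x'‖)
    (xstar : X) (hxstarB : xstar ∈ B)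
    (y yδ : Y) (δ : ℝ) (hδ : 0 ≤ δ)
    (hsol : F xstar = y) (hnoise : ‖yδ - y‖ ≤ δ)
    (x : X) (hxB : x ∈ B)
    (s : X) (hs : s = ContinuousLinearMap.adjoint (F' x) (F x - yδ))
    (α : ℝ) (hα : 0 < α) (hstep : α * ‖s‖ ^ 2 ≤ ‖F x - yδ‖ ^ 2)
    (xplus : X) (hxplus : xplus = x - α • s)
    (τ : ℝ) (hτ : τ ≥ 2 * (1 + η) / (1 - 2 * η))
    (hdisc : ‖F x - yδ‖ ≥ τ * δ) :
    ‖xplus - xstar‖ ≤ ‖x - xstar‖ := by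
  have h1 : (0:ℝ) < 1 - 2 * η := by linarith
  set r := F x - yδ with hr
  have hnr : (0:ℝ) ≤ ‖r‖ := norm_nonneg _
  have htccx := htcc x hxB xstar hxstarB
  have hFdiff : F x - F xstar = r + (yδ - y) := by rw [hr, hsol]; abel
  have hFy : ‖F x - F xstar‖ ≤ ‖r‖ + δ := by
    rw [hFdiff]
    calc ‖r + (yδ - y)‖ ≤ ‖r‖ + ‖yδ - y‖ := norm_add_le _ _
      _ ≤ ‖r‖ + δ := by linarith
  have he_bound : ‖F x - F xstar - F' x (x - xstar)‖ ≤ η * (‖r‖ + δ) :=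
    le_trans htccx (by nlinarith [norm_nonneg (F x - F xstar)])
  have hinner : (inner ℝ s (x - xstar) : ℝ) = inner ℝ r (F' x (x - xstar)) := by
    rw [hs]; exact ContinuousLinearMap.adjoint_inner_left _ _ _
  have hdecomp : F' x (x - xstar) = r + (yδ - y) - (F x - F xstar - F' x (x - xstar)) := by
    rw [← hFdiff]; abel
  have hlow : (inner ℝ s (x - xstar) : ℝ) ≥ ‖r‖^2 - ‖r‖ * δ - ‖r‖ * (η * (‖r‖ + δ)) := by
    rw [hinner, hdecomp, inner_sub_right, inner_add_right, real_inner_self_eq_norm_sq]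
    have h2 : (inner ℝ r (yδ - y) : ℝ) ≥ -(‖r‖ * δ) := by
      have := abs_real_inner_le_norm r (yδ - y)
      have h3 : ‖r‖ * ‖yδ - y‖ ≤ ‖r‖ * δ := by nlinarith
      have := abs_le.mp this
      linarith [this.1]
    have h4 : (inner ℝ r (F x - F xstar - F' x (x - xstar)) : ℝ) ≤ ‖r‖ * (η * (‖r‖ + δ)) := by
      have := abs_real_inner_le_norm r (F x - F xstar - F' x (x - xstar))
      have := abs_le.mp this
      nlinarith [this.2]
    linarith
  have hexp : ‖xplus - xstar‖^2 =
      ‖x - xstar‖^2 - 2 * α * (inner ℝ s (x - xstar) : ℝ) + α^2 * ‖s‖^2 := by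
    have hx2 : xplus - xstar = (x - xstar) - α • s := by rw [hxplus]; abel
    rw [hx2, norm_sub_sq_real, real_inner_smul_right, norm_smul, real_inner_comm]
    rw [mul_pow, Real.norm_eq_abs, sq_abs]
    ring
  have hdisc2 : (1 - 2*η) * ‖r‖ ≥ 2 * (1 + η) * δ := by
    have hτ' : τ * (1 - 2*η) ≥ 2 * (1 + η) := by
      rw [ge_iff_le, div_le_iff₀ h1] at hτ; linarith
    nlinarith [hdisc]
  have hsq : ‖xplus - xstar‖^2 ≤ ‖x - xstar‖^2 := by
    rw [hexp]
    have hA : α ^ 2 * ‖s‖ ^ 2 ≤ α * ‖r‖ ^ 2 := by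
      have h := mul_le_mul_of_nonneg_left hstep hα.le
      calc α ^ 2 * ‖s‖ ^ 2 = α * (α * ‖s‖ ^ 2) := by ring
        _ ≤ α * ‖r‖ ^ 2 := h
    have hB : 2 * α * (‖r‖ ^ 2 - ‖r‖ * δ - ‖r‖ * (η * (‖r‖ + δ))) ≤
        2 * α * (inner ℝ s (x - xstar) : ℝ) :=
      mul_le_mul_of_nonneg_left hlow (by linarith)
    have hkey : α * ‖r‖ * (2 * (1 + η) * δ) ≤ α * ‖r‖ * ((1 - 2 * η) * ‖r‖) :=
      mul_le_mul_of_nonneg_left hdisc2 (mul_nonneg hα.le hnr)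
    have hC : α * ‖r‖ ^ 2 ≤ 2 * α * (‖r‖ ^ 2 - ‖r‖ * δ - ‖r‖ * (η * (‖r‖ + δ))) := by
      nlinarith [hkey]
    linarith [hA, hB, hC]
  nlinarith [norm_nonneg (xplus - xstar), norm_nonneg (x - xstar), hsq]
end

section
/- Let (e_k) be a sequence in a Hilbert space X such that ‖e_k‖ is nonincreasing, and suppose that for every ε > 0 and all sufficiently large k ≤ l there exists n with k ≤ n ≤ l such that |⟨e_n − e_k, e_n⟩| < ε and |⟨e_n − e_l, e_n⟩| < ε. Then (e_k) is a Cauchy sequence. -/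
lemma stmt8_key {X : Type*} [NormedAddCommGroup X] [InnerProductSpace ℝ X]
    (a b : X) : ‖a - b‖^2 = ‖b‖^2 - ‖a‖^2 + 2 * (inner ℝ (a - b) a : ℝ) := by
  rw [← real_inner_self_eq_norm_sq, ← real_inner_self_eq_norm_sq,
    ← real_inner_self_eq_norm_sq]
  simp [inner_sub_left, inner_sub_right, real_inner_comm a b]
  rw [norm_sub_sq_real]; ring

/-- A sequence with nonincreasing norms, such that the inner-product
cross terms can be made small for large indices, is a Cauchy sequence. -/
theorem stmt8
    {X : Type*} [NormedAddCommGroup X] [InnerProductSpace ℝ X]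
    (e : ℕ → X) (hmono : Antitone fun k => ‖e k‖)
    (h : ∀ ε : ℝ, 0 < ε → ∃ K : ℕ, ∀ k l : ℕ, K ≤ k → k ≤ l →
      ∃ n : ℕ, k ≤ n ∧ n ≤ l ∧
        |(inner ℝ (e n - e k) (e n) : ℝ)| < ε ∧
        |(inner ℝ (e n - e l) (e n) : ℝ)| < ε) :
    CauchySeq e := by
  have hb : BddBelow (Set.range fun k => ‖e k‖) := ⟨0, by rintro x ⟨k, rfl⟩; positivity⟩
  have hcau : CauchySeq (fun k => ‖e k‖) := (tendsto_atTop_ciInf hmono hb).cauchySeq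
  have hsq : CauchySeq (fun k => ‖e k‖ ^ 2) := by
    have ht := tendsto_atTop_ciInf hmono hb
    exact Filter.Tendsto.cauchySeq (by simpa [pow_two] using ht.mul ht)
  rw [Metric.cauchySeq_iff] at hsq ⊢
  intro ε hε
  have hδ : 0 < ε^2 / 12 := by positivity
  obtain ⟨K1, hK1⟩ := hsq (ε^2 / 12) hδ
  obtain ⟨K2, hK2⟩ := h (ε^2 / 12) hδ
  refine ⟨max K1 K2, ?_⟩
  have main : ∀ k l, max K1 K2 ≤ k → k ≤ l → dist (e k) (e l) < ε := by
    intro k l hk hkl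
    obtain ⟨n, hkn, hnl, h1, h2⟩ := hK2 k l (le_trans (le_max_right _ _) hk) hkl
    have hK1k : K1 ≤ k := le_trans (le_max_left _ _) hk
    have hnk : dist (‖e k‖^2) (‖e n‖^2) < ε^2/12 := hK1 k hK1k n (le_trans hK1k hkn)
    have e1 : ‖e n - e k‖^2 < 3 * (ε^2/12) := by
      rw [stmt8_key]
      have := abs_lt.mp (by rwa [Real.dist_eq] at hnk)
      have := abs_lt.mp h1
      linarith [this.1, this.2]
    have hln : ‖e l‖ ≤ ‖e n‖ := hmono hnl
    have e2 : ‖e n - e l‖^2 < 3 * (ε^2/12) := by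
      rw [stmt8_key]
      have hll : ‖e l‖^2 ≤ ‖e n‖^2 := by
        apply pow_le_pow_left₀ (norm_nonneg _) hln
      have := abs_lt.mp h2
      linarith [this.1, this.2]
    have h3 : (3 : ℝ) * (ε^2/12) = (ε/2)^2 := by ring
    rw [h3] at e1 e2
    have n1 : ‖e n - e k‖ < ε/2 := lt_of_pow_lt_pow_left₀ 2 (by positivity) e1
    have n2 : ‖e n - e l‖ < ε/2 := lt_of_pow_lt_pow_left₀ 2 (by positivity) e2
    calc dist (e k) (e l) ≤ dist (e k) (e n) + dist (e n) (e l) := dist_triangle _ _ _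
    _ = ‖e n - e k‖ + ‖e n - e l‖ := by rw [dist_eq_norm, dist_eq_norm, ← norm_neg (e k - e n)]; simp
    _ < ε := by linarith
  intro k hk l hl
  rcases le_total k l with hkl | hlk
  · exact main k l hk hkl
  · rw [dist_comm]; exact main l k hl hlk
end

section
/- Suppose the summability ∑_{k=1}^{∞} ω_k α_k δ_{[k]} ‖F_{[k]}(x_k^δ) − y_{[k]}^δ‖ ≤ C < ∞ holds with C = ‖x_0 − x*‖²/(τ(1−2η) − 2(1+η)), α_k ≥ α_min > 0, all noise levels δ_i ≥ δ_min > 0, and in every cycle of N steps at least one index k has ω_k = 1 (hence ‖F_{[k]}(x_k^δ) − y_{[k]}^δ‖ ≥ τ δ_{[k]}). Then for every l ∈ ℕ, C ≥ l · α_min · δ_min · τ δ_min, which is a contradiction for l large; hence there exists a cycle in which ω_k = 0 for all its N steps. -/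
/-- If the weighted residual sums are uniformly bounded, the loping
weights are 0/1, ω_k = 1 forces the residual above τ δ_[k], step sizes are bounded
below and noise levels are bounded below by δ_min > 0, then there exists a cycle in
which ω_k = 0 for all of its N steps (finiteness of the stopping index). -/
theorem stmt11
    (N : ℕ) (hN : 0 < N) (C αmin δmin τ : ℝ)
    (ω α d r : ℕ → ℝ)
    (hω01 : ∀ k, ω k = 0 ∨ ω k = 1)
    (hωdisc : ∀ k, ω k = 1 → r k ≥ τ * d k)
    (hαmin : 0 < αmin) (hα : ∀ k, αmin ≤ α k)
    (hδmin : 0 < δmin) (hd : ∀ k, δmin ≤ d k)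
    (hτ : 0 < τ)
    (hsum : ∀ L : ℕ, ∑ k ∈ Finset.range L, ω k * α k * d k * r k ≤ C) :
    ∃ l : ℕ, ∀ i < N, ω (N * l + i) = 0 := by
  by_contra hcon
  push_neg at hcon
  -- choose witnesses
  choose i hi hωi using hcon
  have hω1 : ∀ l, ω (N * l + i l) = 1 := fun l => (hω01 _).resolve_left (hωi l)
  set c : ℝ := αmin * δmin * (τ * δmin) with hc
  have hcpos : 0 < c := by positivity
  -- each term is nonnegative
  have hnonneg : ∀ k, 0 ≤ ω k * α k * d k * r k := by
    intro k
    rcases hω01 k with h | h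
    · simp [h]
    · have hr : τ * δmin ≤ r k := le_trans (by nlinarith [hd k]) (hωdisc k h)
      have : 0 ≤ r k := le_trans (by positivity) hr
      have hαk : 0 < α k := lt_of_lt_of_le hαmin (hα k)
      have hdk : 0 < d k := lt_of_lt_of_le hδmin (hd k)
      rw [h]; positivity
  -- term bound when ω = 1
  have hterm : ∀ k, ω k = 1 → c ≤ ω k * α k * d k * r k := by
    intro k h
    have hr : τ * δmin ≤ r k := le_trans (by nlinarith [hd k]) (hωdisc k h)
    have hαk : αmin ≤ α k := hα k
    have hdk : δmin ≤ d k := hd k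
    rw [h, one_mul, hc]
    have h1 : αmin * δmin ≤ α k * d k :=
      mul_le_mul hαk hdk hδmin.le (le_trans hαmin.le hαk)
    exact mul_le_mul h1 hr (by positivity)
      (mul_nonneg (le_trans hαmin.le hαk) (le_trans hδmin.le hdk))
  obtain ⟨L, hL⟩ := exists_nat_gt (C / c)
  have hCL : C < L * c := by
    rw [div_lt_iff₀ hcpos] at hL; exact hL
  -- sum over the selected indices
  have hinj : Set.InjOn (fun l => N * l + i l) (Finset.range L) := by
    intro a _ b _ hab
    simp only at hab
    have ha2 : (N * a + i a) / N = a := by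
      rw [Nat.mul_add_div hN, Nat.div_eq_of_lt (hi a), Nat.add_zero]
    have hb2 : (N * b + i b) / N = b := by
      rw [Nat.mul_add_div hN, Nat.div_eq_of_lt (hi b), Nat.add_zero]
    rw [← ha2, ← hb2, hab]
  have hsub : (Finset.range L).image (fun l => N * l + i l) ⊆ Finset.range (N * L) := by
    intro k hk
    simp only [Finset.mem_image, Finset.mem_range] at hk ⊢
    obtain ⟨l, hl, rfl⟩ := hk
    have := hi l
    calc N * l + i l < N * l + N := by omega
      _ = N * (l + 1) := by ring
      _ ≤ N * L := Nat.mul_le_mul_left N hl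
  have key : (L : ℝ) * c ≤ ∑ k ∈ Finset.range (N * L), ω k * α k * d k * r k := by
    calc (L : ℝ) * c = ∑ l ∈ Finset.range L, c := by
          rw [Finset.sum_const, Finset.card_range, nsmul_eq_mul]
      _ ≤ ∑ l ∈ Finset.range L,
            ω (N * l + i l) * α (N * l + i l) * d (N * l + i l) * r (N * l + i l) :=
          Finset.sum_le_sum (fun l _ => hterm _ (hω1 l))
      _ = ∑ k ∈ (Finset.range L).image (fun l => N * l + i l),
            ω k * α k * d k * r k := by
          rw [Finset.sum_image (fun a ha b hb h => hinj ha hb h)]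
      _ ≤ ∑ k ∈ Finset.range (N * L), ω k * α k * d k * r k :=
          Finset.sum_le_sum_of_subset_of_nonneg hsub (fun k _ _ => hnonneg k)
  linarith [hsum (N * L)]
end

section
/- If the stopping index k_*^δ (a multiple of N such that x_{k_*^δ}^δ = x_{k_*^δ+1}^δ = … = x_{k_*^δ+N−1}^δ) is attained, then ‖F_i(x_{k_*^δ}^δ) − y_i^δ‖ < τ δ_i for all i = 0,…,N−1. -/
/-- If the iteration is stationary over a whole cycle starting at the
stopping index k_* = N·m, then all residuals at x_{k_*} are below the thresholds τ δ_i. -/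
theorem stmt12
    {X Y : Type*} [NormedAddCommGroup X] [NormedAddCommGroup Y]
    (N : ℕ) (hN : 0 < N)
    (F : ℕ → X → Y) (yδ : ℕ → Y) (δ : ℕ → ℝ) (hδ : ∀ i, 0 < δ i)
    (η τ : ℝ) (hη0 : 0 ≤ η) (hη : η < 1 / 2)
    (hτ : 2 * (1 + η) < τ * (1 - 2 * η))
    (x : ℕ → X) (xstar : X)
    (kstar m : ℕ) (hkstar : kstar = N * m)
    (α ω : ℕ → ℝ) (hα : ∀ k, 0 < α k)
    (hωdef : ∀ i < N,
      (ω (kstar + i) = 1 ↔ ‖F i (x (kstar + i)) - yδ i‖ ≥ τ * δ i) ∧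
      (ω (kstar + i) = 0 ∨ ω (kstar + i) = 1))
    (hmon : ∀ i < N,
      ‖x (kstar + i + 1) - xstar‖ ^ 2 - ‖x (kstar + i) - xstar‖ ^ 2 ≤
        ω (kstar + i) * α (kstar + i) * ‖F i (x (kstar + i)) - yδ i‖ *
          ((2 * η - 1) * ‖F i (x (kstar + i)) - yδ i‖ + 2 * (1 + η) * δ i))
    (hstat : ∀ i < N, x (kstar + i) = x kstar)
    (hstat' : ∀ i < N, x (kstar + i + 1) = x (kstar + i)) :
    ∀ i < N, ‖F i (x kstar) - yδ i‖ < τ * δ i := by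
  intro i hi
  by_contra hge
  push_neg at hge
  have hxi : x (kstar + i) = x kstar := hstat i hi
  have hω1 : ω (kstar + i) = 1 := by
    exact (hωdef i hi).1.mpr (by rw [hxi]; exact hge)
  have hm := hmon i hi
  rw [hstat' i hi, hxi, hω1, sub_self, one_mul] at hm
  set r := ‖F i (x kstar) - yδ i‖ with hr
  have hτpos : 0 < τ := by nlinarith
  have hrpos : 0 < r := lt_of_lt_of_le (mul_pos hτpos (hδ i)) hge
  have hneg : (2 * η - 1) * r + 2 * (1 + η) * δ i < 0 := by
    have h1 : (1 - 2 * η) * r ≥ (1 - 2 * η) * (τ * δ i) := by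
      apply mul_le_mul_of_nonneg_left hge; linarith
    nlinarith [hδ i]
  nlinarith [mul_pos (hα (kstar + i)) hrpos]
end
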